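/- Let H be a complex Hilbert space and A a compact self-adjoint operator on H. Then A has at most finitely many negative eigenvalues (counted with multiplicity) if and only if there exists a finite dimensional subspace V ⊆ H with ⟨A g, g⟩ ≥ 0 for all g ∈ V^⊥. -/

import Mathlib

open Module.End in
lemma aux_neg_form {H : Type*} [NormedAddCommGroup H] [InnerProductSpace ℂ H] [CompleteSpace H]
    (A : H →L[ℂ] H) (hsa : IsSelfAdjoint A) {g : H}
    (hg : g ∈ ⨆ μ : {x : ℝ // x < 0},
      Module.End.eigenspace (A : H →ₗ[ℂ] H) ((μ : ℝ) : ℂ)) (hg0 : g ≠ 0) :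
    (inner ℂ (A g) g : ℂ).re < 0 := by
  have hsym : (A : H →ₗ[ℂ] H).IsSymmetric :=
    ContinuousLinearMap.isSelfAdjoint_iff_isSymmetric.mp hsa
  obtain ⟨f, hf, hsum⟩ := (Submodule.mem_iSup_iff_exists_finsupp _ _).mp hg
  have hAfi : ∀ i : {x : ℝ // x < 0}, A (f i) = ((i : ℝ) : ℂ) • f i := fun i =>
    mem_eigenspace_iff.mp (hf i)
  have horth : ∀ i j : {x : ℝ // x < 0}, i ≠ j → (inner ℂ (f i) (f j) : ℂ) = 0 := by
    intro i j hij
    have := hsym.orthogonalFamily_eigenspaces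
      (i := ((i : ℝ) : ℂ)) (j := ((j : ℝ) : ℂ))
      (by simpa [Complex.ofReal_inj] using fun h => hij (Subtype.ext h))
      ⟨f i, hf i⟩ ⟨f j, hf j⟩
    simpa using this
  have key : (inner ℂ (A g) g : ℂ) =
      ∑ i ∈ f.support, ((i : ℝ) : ℂ) * (‖f i‖ : ℂ) ^ 2 := by
    rw [← hsum, Finsupp.sum, map_sum, sum_inner]
    rw [Finset.sum_congr rfl]
    intro i hi
    rw [inner_sum]
    rw [Finset.sum_eq_single i]
    · rw [hAfi, inner_smul_left, inner_self_eq_norm_sq_to_K]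
      simp [Complex.conj_ofReal]
    · intro j hj hji
      rw [hAfi, inner_smul_left]
      have : (inner ℂ (f i) (f j) : ℂ) = 0 := horth i j (Ne.symm hji)
      simp [this]
    · intro hi'; simp at hi; exact absurd hi' (by simp [hi])
  have hre : (inner ℂ (A g) g : ℂ).re = ∑ i ∈ f.support, (i : ℝ) * ‖f i‖ ^ 2 := by
    rw [key]
    push_cast
    rw [Complex.re_sum]
    congr 1; ext i; simp [← Complex.ofReal_pow, ← Complex.ofReal_mul]
  rw [hre]
  have hne : ∃ i ∈ f.support, (i : ℝ) * ‖f i‖ ^ 2 < 0 := by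
    have : f.support.Nonempty := by
      rcases Finset.eq_empty_or_nonempty f.support with h | h
      · exfalso; apply hg0; rw [← hsum, Finsupp.sum, h, Finset.sum_empty]
      · exact h
    obtain ⟨i, hi⟩ := this
    refine ⟨i, hi, ?_⟩
    have hfi : f i ≠ 0 := Finsupp.mem_support_iff.mp hi
    exact mul_neg_of_neg_of_pos i.2 (pow_pos (norm_pos_iff.mpr hfi) 2)
  obtain ⟨i, hi, hlt⟩ := hne
  calc ∑ i ∈ f.support, (i : ℝ) * ‖f i‖ ^ 2 < ∑ _i ∈ f.support, (0:ℝ) := by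
        apply Finset.sum_lt_sum
        · intro j _; exact mul_nonpos_of_nonpos_of_nonneg j.2.le (by positivity)
        · exact ⟨i, hi, hlt⟩
    _ = 0 := by simp

lemma aux_exists_neg_eigen {H : Type*} [NormedAddCommGroup H] [InnerProductSpace ℂ H]
    [CompleteSpace H]
    (A : H →L[ℂ] H) (hA : IsCompactOperator A) (hsa : IsSelfAdjoint A)
    (K : Submodule ℂ H) (hKc : IsClosed (K : Set H))
    (hKinv : ∀ x ∈ K, A x ∈ K) {g : H} (hgK : g ∈ K)
    (hneg : (inner ℂ (A g) g : ℂ).re < 0) :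
    ∃ μ : ℝ, μ < 0 ∧ ∃ x ∈ K, x ≠ 0 ∧ A x = (μ : ℂ) • x := by
  classical
  have hg0 : g ≠ 0 := by rintro rfl; simp at hneg
  -- scaling lemma
  have hscale : ∀ (r : ℝ) (x : H),
      (inner ℂ (A ((r:ℂ) • x)) ((r:ℂ) • x) : ℂ).re = r ^ 2 * (inner ℂ (A x) x : ℂ).re := by
    intro r x
    rw [map_smul, inner_smul_left, inner_smul_right, Complex.conj_ofReal,
      ← mul_assoc, ← Complex.ofReal_mul, ← sq, Complex.re_ofReal_mul]
  set S : Set ℝ := (fun x : H => (inner ℂ (A x) x : ℂ).re) '' {x : H | x ∈ K ∧ ‖x‖ = 1} with hS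
  have habs : ∀ x : H, |(inner ℂ (A x) x : ℂ).re| ≤ ‖A‖ * ‖x‖ ^ 2 := by
    intro x
    calc |(inner ℂ (A x) x : ℂ).re| ≤ ‖(inner ℂ (A x) x : ℂ)‖ := Complex.abs_re_le_norm _
      _ ≤ ‖A x‖ * ‖x‖ := norm_inner_le_norm _ _
      _ ≤ ‖A‖ * ‖x‖ * ‖x‖ := mul_le_mul_of_nonneg_right (A.le_opNorm x) (norm_nonneg x)
      _ = ‖A‖ * ‖x‖ ^ 2 := by ring
  have hbdd : BddBelow S := by
    refine ⟨-‖A‖, ?_⟩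
    rintro r ⟨x, ⟨hxK, hx1⟩, rfl⟩
    have h9 := habs x
    rw [hx1] at h9
    simp only [one_pow, mul_one] at h9
    linarith [abs_le.mp h9]
  set x₀ : H := ((‖g‖⁻¹ : ℝ) : ℂ) • g with hx₀
  have hx₀1 : ‖x₀‖ = 1 := by
    rw [hx₀, norm_smul]
    simp [norm_inv, inv_mul_cancel₀ (norm_ne_zero_iff.mpr hg0)]
  have hx₀mem : (inner ℂ (A x₀) x₀ : ℂ).re ∈ S := ⟨x₀, ⟨K.smul_mem _ hgK, hx₀1⟩, rfl⟩
  have hx₀neg : (inner ℂ (A x₀) x₀ : ℂ).re < 0 := by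
    rw [hx₀, hscale]
    exact mul_neg_of_pos_of_neg (pow_pos (inv_pos.mpr (norm_pos_iff.mpr hg0)) 2) hneg
  set m : ℝ := sInf S with hm
  have hmneg : m < 0 := lt_of_le_of_lt (csInf_le hbdd hx₀mem) hx₀neg
  have hmle : ∀ x ∈ K, m * ‖x‖ ^ 2 ≤ (inner ℂ (A x) x : ℂ).re := by
    intro x hxK
    rcases eq_or_ne x 0 with rfl | hx0
    · simp
    · have hnx : (0:ℝ) < ‖x‖ := norm_pos_iff.mpr hx0
      have h1 : m ≤ (inner ℂ (A (((‖x‖⁻¹ : ℝ):ℂ) • x)) (((‖x‖⁻¹ : ℝ):ℂ) • x) : ℂ).re := by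
        apply csInf_le hbdd
        exact ⟨_, ⟨K.smul_mem _ hxK, by rw [norm_smul]; simp [inv_mul_cancel₀ hnx.ne']⟩, rfl⟩
      rw [hscale] at h1
      have h9 := mul_le_mul_of_nonneg_left h1 (sq_nonneg ‖x‖)
      calc m * ‖x‖ ^ 2 = ‖x‖ ^ 2 * m := by ring
        _ ≤ ‖x‖ ^ 2 * ((‖x‖⁻¹) ^ 2 * (inner ℂ (A x) x : ℂ).re) := h9
        _ = (inner ℂ (A x) x : ℂ).re := by
            field_simp
  -- the operator S = A - m • 1
  set T : H →L[ℂ] H := A - (m : ℂ) • 1 with hT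
  have hTapp : ∀ x : H, T x = A x - (m:ℂ) • x := by intro x; simp [hT]
  have hTsa : IsSelfAdjoint T := by
    refine hsa.sub (IsSelfAdjoint.smul ?_ (IsSelfAdjoint.one _))
    exact Complex.conj_ofReal m
  have hTsym : ∀ x y : H, (inner ℂ (T x) y : ℂ) = inner ℂ x (T y) :=
    fun x y => ContinuousLinearMap.isSelfAdjoint_iff_isSymmetric.mp hTsa x y
  have hTK : ∀ x ∈ K, T x ∈ K := by
    intro x hx
    rw [hTapp]
    exact K.sub_mem (hKinv x hx) (K.smul_mem _ hx)
  -- B x := re ⟪T x, x⟫ ≥ 0 on K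
  set B : H → ℝ := fun x => (inner ℂ (T x) x : ℂ).re with hB
  have hBval : ∀ x : H, B x = (inner ℂ (A x) x : ℂ).re - m * ‖x‖ ^ 2 := by
    intro x
    rw [hB]
    simp only [hTapp, inner_sub_left, inner_smul_left, Complex.conj_ofReal,
      inner_self_eq_norm_sq_to_K]
    norm_num [Complex.sub_re, Complex.mul_re, pow_two]
  have hBnn : ∀ x ∈ K, 0 ≤ B x := by
    intro x hx; rw [hBval]; linarith [hmle x hx]
  -- Cauchy-Schwarz for B on K
  have hCS : ∀ x ∈ K, ∀ y ∈ K, ((inner ℂ (T x) y : ℂ).re) ^ 2 ≤ B x * B y := by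
    intro x hx y hy
    have hq : ∀ t : ℝ, 0 ≤ B y * (t * t) + (2 * (inner ℂ (T x) y : ℂ).re) * t + B x := by
      intro t
      have hmem : x + (t:ℂ) • y ∈ K := K.add_mem hx (K.smul_mem _ hy)
      have h0 := hBnn _ hmem
      simp only [hB] at h0 ⊢
      have h5 : (inner ℂ y (T x) : ℂ).re = (inner ℂ (T x) y : ℂ).re := by
        rw [← inner_conj_symm (T x) y, Complex.conj_re]
      have hre : (inner ℂ (T (x + (t:ℂ) • y)) (x + (t:ℂ) • y) : ℂ).re =
          (inner ℂ (T y) y : ℂ).re * (t * t) + (2 * (inner ℂ (T x) y : ℂ).re) * t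
            + (inner ℂ (T x) x : ℂ).re := by
        rw [map_add, map_smul, inner_add_left, inner_add_right, inner_add_right,
          inner_smul_left, inner_smul_right, inner_smul_left, inner_smul_right, hTsym y x]
        simp only [Complex.conj_ofReal, Complex.add_re, Complex.mul_re, Complex.ofReal_re,
          Complex.ofReal_im]
        rw [h5]
        ring
      rw [hre] at h0
      linarith
    have := discrim_le_zero hq
    rw [discrim] at this
    nlinarith
  -- key estimate : ‖T x‖^2 ≤ ‖T‖ * B x  on K
  have hkey : ∀ x ∈ K, ‖T x‖ ^ 2 ≤ ‖T‖ * B x := by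
    intro x hx
    have hTx : T x ∈ K := hTK x hx
    have h1 := hCS x hx (T x) hTx
    have h2 : (inner ℂ (T x) (T x) : ℂ).re = ‖T x‖ ^ 2 := by
      rw [inner_self_eq_norm_sq_to_K]; norm_num [pow_two, Complex.mul_re]
    rw [h2] at h1
    have h3 : B (T x) ≤ ‖T‖ * ‖T x‖ ^ 2 := by
      rw [hB]
      calc (inner ℂ (T (T x)) (T x) : ℂ).re ≤ |(inner ℂ (T (T x)) (T x) : ℂ).re| := le_abs_self _
        _ ≤ ‖(inner ℂ (T (T x)) (T x) : ℂ)‖ := Complex.abs_re_le_norm _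
        _ ≤ ‖T (T x)‖ * ‖T x‖ := norm_inner_le_norm _ _
        _ ≤ ‖T‖ * ‖T x‖ * ‖T x‖ := mul_le_mul_of_nonneg_right (T.le_opNorm _) (norm_nonneg _)
        _ = ‖T‖ * ‖T x‖ ^ 2 := by ring
    rcases eq_or_ne (‖T x‖) 0 with h0 | h0
    · rw [h0]
      have hb := hBnn x hx
      simpa using mul_nonneg (norm_nonneg T) hb
    · have hpos : (0:ℝ) < ‖T x‖ ^ 2 := by positivity
      have h4 : (‖T x‖ ^ 2) ^ 2 ≤ B x * (‖T‖ * ‖T x‖ ^ 2) := by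
        calc (‖T x‖ ^ 2) ^ 2 ≤ B x * B (T x) := h1
          _ ≤ B x * (‖T‖ * ‖T x‖ ^ 2) := mul_le_mul_of_nonneg_left h3 (hBnn x hx)
      nlinarith
  -- minimizing sequence
  have hSne : S.Nonempty := ⟨_, hx₀mem⟩
  have hseq : ∀ n : ℕ, ∃ x : H, x ∈ K ∧ ‖x‖ = 1 ∧ (inner ℂ (A x) x : ℂ).re < m + 1/(n+1) := by
    intro n
    have h9 : m < m + 1/(n+1) := by
      have h10 : (0:ℝ) < 1/(n+1) := by positivity
      linarith
    obtain ⟨r, ⟨x, ⟨hxK, hx1⟩, rfl⟩, hr⟩ := exists_lt_of_csInf_lt hSne h9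
    exact ⟨x, hxK, hx1, hr⟩
  choose x hxK hx1 hxlt using hseq
  have hBx : ∀ n : ℕ, B (x n) < 1/(n+1) := by
    intro n
    rw [hBval, hx1]
    simpa using sub_lt_iff_lt_add'.mpr (by simpa using hxlt n)
  have hBto : Filter.Tendsto (fun n => B (x n)) Filter.atTop (nhds 0) := by
    apply squeeze_zero (fun n => hBnn _ (hxK n)) (fun n => (hBx n).le)
    exact tendsto_one_div_add_atTop_nhds_zero_nat
  have hTxto : Filter.Tendsto (fun n => T (x n)) Filter.atTop (nhds 0) := by
    rw [tendsto_zero_iff_norm_tendsto_zero]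
    have hb : ∀ n, ‖T (x n)‖ ≤ Real.sqrt (‖T‖ * B (x n)) := by
      intro n
      rw [← Real.sqrt_sq (norm_nonneg _)]
      exact Real.sqrt_le_sqrt (hkey _ (hxK n))
    apply squeeze_zero (fun n => norm_nonneg _) hb
    have h6 : Filter.Tendsto (fun n => ‖T‖ * B (x n)) Filter.atTop (nhds 0) := by
      simpa using hBto.const_mul ‖T‖
    have h7 := (Real.continuous_sqrt.tendsto 0).comp h6
    simp only [Real.sqrt_zero] at h7
    exact h7
  -- compactness
  have hC : IsCompact (closure (A '' Metric.closedBall 0 1)) :=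
    hA.isCompact_closure_image_of_bounded Metric.isBounded_closedBall
  have hmemC : ∀ n, A (x n) ∈ closure (A '' Metric.closedBall 0 1) := by
    intro n
    apply subset_closure
    exact ⟨x n, by simp [Metric.mem_closedBall, hx1 n], rfl⟩
  obtain ⟨y, -, φ, hφ, hy⟩ := hC.tendsto_subseq hmemC
  have hTsub : Filter.Tendsto (fun n => T (x (φ n))) Filter.atTop (nhds 0) :=
    hTxto.comp hφ.tendsto_atTop
  have hmx : Filter.Tendsto (fun n => (m:ℂ) • x (φ n)) Filter.atTop (nhds y) := by
    have h9 : (fun n => (m:ℂ) • x (φ n)) = fun n => A (x (φ n)) - T (x (φ n)) := by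
      funext n; rw [hTapp]; abel
    rw [h9]
    simpa using hy.sub hTsub
  have hm0 : (m:ℂ) ≠ 0 := by
    simp only [ne_eq, Complex.ofReal_eq_zero]
    exact hmneg.ne
  have hxlim : Filter.Tendsto (fun n => x (φ n)) Filter.atTop (nhds ((m:ℂ)⁻¹ • y)) := by
    have h8 := hmx.const_smul ((m:ℂ)⁻¹)
    simp only [smul_smul, inv_mul_cancel₀ hm0, one_smul] at h8
    exact h8
  set zz : H := (m:ℂ)⁻¹ • y with hxinf
  have hxinfK : zz ∈ K := hKc.mem_of_tendsto hxlim (Filter.Eventually.of_forall fun n => hxK _)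
  have hxinf1 : ‖zz‖ = 1 := by
    have h1 : Filter.Tendsto (fun n => ‖x (φ n)‖) Filter.atTop (nhds ‖zz‖) :=
      (continuous_norm.tendsto _).comp hxlim
    have h2 : Filter.Tendsto (fun n => ‖x (φ n)‖) Filter.atTop (nhds 1) := by
      simpa [hx1] using tendsto_const_nhds (α := ℝ) (x := 1)
    exact tendsto_nhds_unique h1 h2
  have hAx : A zz = (m:ℂ) • zz := by
    have h1 : Filter.Tendsto (fun n => A (x (φ n))) Filter.atTop (nhds (A zz)) :=
      (A.continuous.tendsto _).comp hxlim
    have h2 : A zz = y := tendsto_nhds_unique h1 hy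
    rw [h2, hxinf, smul_smul, mul_inv_cancel₀ hm0, one_smul]
  exact ⟨m, hmneg, zz, hxinfK, by rw [← norm_ne_zero_iff, hxinf1]; norm_num, hAx⟩


/-- A compact self-adjoint operator has at most finitely many negative eigenvalues
(counted with multiplicity) iff `⟨A g, g⟩ ≥ 0` for all `g` in the orthogonal
complement of some finite dimensional subspace. -/
theorem finitely_many_negative_eigenvalues_iff
    {H : Type*} [NormedAddCommGroup H] [InnerProductSpace ℂ H] [CompleteSpace H]
    (A : H →L[ℂ] H) (hA : IsCompactOperator A) (hsa : IsSelfAdjoint A) :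
    FiniteDimensional ℂ
        ↥(⨆ μ : {x : ℝ // x < 0},
          Module.End.eigenspace (A : H →ₗ[ℂ] H) ((μ : ℝ) : ℂ)) ↔
      ∃ V : Submodule ℂ H, FiniteDimensional ℂ V ∧
        ∀ g ∈ Vᗮ, 0 ≤ (inner ℂ (A g) g : ℂ).re := by
  classical
  set W : Submodule ℂ H := ⨆ μ : {x : ℝ // x < 0},
      Module.End.eigenspace (A : H →ₗ[ℂ] H) ((μ : ℝ) : ℂ) with hW
  have hsym : (A : H →ₗ[ℂ] H).IsSymmetric :=
    ContinuousLinearMap.isSelfAdjoint_iff_isSymmetric.mp hsa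
  constructor
  · intro hfin
    refine ⟨W, hfin, ?_⟩
    intro g hg
    by_contra hneg
    push_neg at hneg
    have hle : W ≤ Submodule.comap (A : H →ₗ[ℂ] H) W := by
      apply iSup_le
      intro μ y hy
      have h1 : (A : H →ₗ[ℂ] H) y = ((μ : ℝ) : ℂ) • y := Module.End.mem_eigenspace_iff.mp hy
      have h2 : y ∈ W :=
        le_iSup (fun μ : {x : ℝ // x < 0} =>
          Module.End.eigenspace (A : H →ₗ[ℂ] H) ((μ : ℝ) : ℂ)) μ hy
      simp only [Submodule.mem_comap, h1]
      exact W.smul_mem _ h2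
    have hWinv : ∀ x ∈ Wᗮ, A x ∈ Wᗮ := by
      intro x hx
      rw [Submodule.mem_orthogonal]
      intro u hu
      have h3 : (inner ℂ (A u) x : ℂ) = inner ℂ u (A x) := hsym u x
      rw [← h3]
      have h4 : A u ∈ W := by
        have := hle hu
        simpa using Submodule.mem_comap.mp this
      exact (Submodule.mem_orthogonal W x).mp hx _ h4
    obtain ⟨μ, hμ, z, hzW, hz0, hAz⟩ :=
      aux_exists_neg_eigen A hA hsa Wᗮ (Submodule.isClosed_orthogonal W) hWinv hg hneg
    have hzeig : z ∈ W :=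
      le_iSup (fun μ : {x : ℝ // x < 0} =>
          Module.End.eigenspace (A : H →ₗ[ℂ] H) ((μ : ℝ) : ℂ)) ⟨μ, hμ⟩
        (Module.End.mem_eigenspace_iff.mpr (by simpa using hAz))
    exact hz0 (Submodule.disjoint_def.mp W.orthogonal_disjoint z hzeig hzW)
  · rintro ⟨V, hVfin, hpos⟩
    haveI := hVfin
    apply Module.rank_lt_aleph0_iff.mp
    refine lt_of_le_of_lt (rank_le fun s hs => ?_) (Cardinal.nat_lt_aleph0 (Module.finrank ℂ V))
    by_contra hcard
    push_neg at hcard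
    have hv : LinearIndependent ℂ (fun i : s => ((i : ↥W) : H)) :=
      hs.map' W.subtype W.ker_subtype
    set U : Submodule ℂ H := Submodule.span ℂ (Set.range fun i : s => ((i : ↥W) : H)) with hU
    haveI : FiniteDimensional ℂ U := FiniteDimensional.span_of_finite ℂ (Set.finite_range _)
    have hUcard : Module.finrank ℂ U = s.card := by
      rw [hU, finrank_span_eq_card hv, Fintype.card_coe]
    set f : U →ₗ[ℂ] V := V.orthogonalProjectionOnto.toLinearMap.comp U.subtype with hf
    have hninj : LinearMap.ker f ≠ ⊥ := by
      intro hker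
      have := LinearMap.finrank_le_finrank_of_injective (LinearMap.ker_eq_bot.mp hker)
      rw [hUcard] at this
      omega
    obtain ⟨x, hxker, hx0⟩ := Submodule.exists_mem_ne_zero_of_ne_bot hninj
    have hfx : V.orthogonalProjectionOnto (x : H) = 0 := LinearMap.mem_ker.mp hxker
    have hxV : (x : H) ∈ Vᗮ := Submodule.orthogonalProjectionOnto_eq_zero_iff.mp hfx
    have hxW : (x : H) ∈ W := by
      have hUW : U ≤ W := Submodule.span_le.mpr (by rintro _ ⟨i, rfl⟩; exact (i : ↥W).2)
      exact hUW x.2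
    have h1 := hpos _ hxV
    have h2 := aux_neg_form A hsa hxW (mt Submodule.coe_eq_zero.mp hx0)
    linarith
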